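/- Let n be a positive integer and t = ⌈log₂(n+1)⌉. For every binary sequence C' = c'_1 ⋯ c'_n ∈ {0,1}^n with c'_{2^i} = 0 for all 0 ≤ i ≤ t−1, and every a with 0 ≤ a ≤ n, there exist bits d_0, …, d_{t−1} ∈ {0,1} such that the sequence C obtained from C' by setting c_{2^i} = d_i for 0 ≤ i ≤ t−1 (and keeping all other coordinates equal to those of C') satisfies syn(C) = a. Specifically, one may take d_{t−1}⋯d_1 d_0 to be the binary representation of the deficiency d = a − syn(C') mod (n+1). -/

import Mathlib

/-- VT syndrome of a binary sequence `s_1 ⋯ s_n` (represented 0-indexed):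
`syn S = (∑ i, i · s_i) mod (n+1)`. -/
def synBin {n : ℕ} (S : Fin n → Fin 2) : ℕ :=
  (∑ i : Fin n, (i.val + 1) * (S i).val) % (n + 1)

/-- The binary VT code `VT_a(n)`. -/
def VTbin (n : ℕ) (a : ℕ) : Finset (Fin n → Fin 2) :=
  Finset.univ.filter fun S => synBin S = a

lemma sum_testBit_eq (t : ℕ) : ∀ d < 2 ^ t,
    ∑ i ∈ Finset.range t, 2 ^ i * (if d.testBit i then 1 else 0) = d := by
  induction t with
  | zero => intro d hd; interval_cases d; simp
  | succ t ih =>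
    intro d hd
    rw [Finset.sum_range_succ' (fun i => 2 ^ i * (if d.testBit i then 1 else 0))]
    have h1 : ∀ i, d.testBit (i + 1) = (d / 2).testBit i := fun i => by
      rw [Nat.testBit_succ]
    simp only [h1, pow_succ, pow_zero, one_mul, Nat.testBit_zero]
    have h2 : ∑ i ∈ Finset.range t, 2 ^ i * 2 * (if (d / 2).testBit i then 1 else 0)
        = 2 * ∑ i ∈ Finset.range t, 2 ^ i * (if (d / 2).testBit i then 1 else 0) := by
      rw [Finset.mul_sum]; congr 1; ext i; ring
    have hd2 : d / 2 < 2 ^ t := by rw [pow_succ] at hd; omega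
    rw [h2, ih (d / 2) hd2]
    rcases Nat.even_or_odd d with h | h
    · have h' := Nat.even_iff.mp h; simp [h']; omega
    · have h' := Nat.odd_iff.mp h; simp [h']; omega

theorem vt_binary_systematic_dyadic_fill (n : ℕ) (hn : 1 ≤ n)
    (t : ℕ) (ht : t = Nat.clog 2 (n + 1))
    (C' : Fin n → Fin 2)
    (hC' : ∀ i < t, ∀ h : 2 ^ i - 1 < n, C' ⟨2 ^ i - 1, h⟩ = 0)
    (a : ℕ) (ha : a ≤ n) :
    ∃ C : Fin n → Fin 2,
      (∀ j : Fin n, (∀ i < t, j.val + 1 ≠ 2 ^ i) → C j = C' j) ∧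
      (∀ i < t, ∀ h : 2 ^ i - 1 < n,
        C ⟨2 ^ i - 1, h⟩ =
          if Nat.testBit ((a + (n + 1) - synBin C') % (n + 1)) i then 1 else 0) ∧
      synBin C = a := by
  set d : ℕ := (a + (n + 1) - synBin C') % (n + 1) with hd_def
  have hd : d < n + 1 := Nat.mod_lt _ (by omega)
  have hnt : n + 1 ≤ 2 ^ t := by
    rw [ht]
    exact (Nat.clog_le_iff_le_pow (by norm_num)).mp le_rfl
  have hpow : ∀ i < t, 2 ^ i ≤ n := by
    intro i hi
    by_contra h
    push_neg at h
    have : Nat.clog 2 (n + 1) ≤ i := (Nat.clog_le_iff_le_pow (by norm_num)).mpr (by omega)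
    omega
  have hone : ∀ i : ℕ, 1 ≤ 2 ^ i := fun i => Nat.one_le_two_pow
  set C : Fin n → Fin 2 := fun j =>
    if h : ∃ i, i < t ∧ j.val + 1 = 2 ^ i then
      (if d.testBit (Nat.log 2 (j.val + 1)) then 1 else 0)
    else C' j with hC_def
  refine ⟨C, ?_, ?_, ?_⟩
  · intro j hj
    have : ¬ ∃ i, i < t ∧ j.val + 1 = 2 ^ i := by
      rintro ⟨i, hi, hji⟩
      exact hj i hi hji
    simp only [hC_def, dif_neg this]
  · intro i hi h
    have hji : (2 ^ i - 1) + 1 = 2 ^ i := by have := hone i; omega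
    have hex : ∃ k, k < t ∧ ((⟨2 ^ i - 1, h⟩ : Fin n) : ℕ) + 1 = 2 ^ k := ⟨i, hi, hji⟩
    simp only [hC_def, dif_pos hex]
    have hlog : Nat.log 2 (((⟨2 ^ i - 1, h⟩ : Fin n) : ℕ) + 1) = i := by
      simp only [hji]
      exact Nat.log_pow one_lt_two i
    rw [hlog]
  · -- syndrome computation
    have key : ∑ j : Fin n, (j.val + 1) * (C j).val
        = (∑ j : Fin n, (j.val + 1) * (C' j).val) + d := by
      have hsplit := Finset.sum_filter_add_sum_filter_not Finset.univ
        (fun j : Fin n => ∃ i, i < t ∧ j.val + 1 = 2 ^ i)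
        (fun j : Fin n => (j.val + 1) * (C j).val)
      have hsplit' := Finset.sum_filter_add_sum_filter_not Finset.univ
        (fun j : Fin n => ∃ i, i < t ∧ j.val + 1 = 2 ^ i)
        (fun j : Fin n => (j.val + 1) * (C' j).val)
      have hnotpart : ∑ j ∈ Finset.univ.filter
            (fun j : Fin n => ¬ ∃ i, i < t ∧ j.val + 1 = 2 ^ i),
            (j.val + 1) * (C j).val
          = ∑ j ∈ Finset.univ.filter
            (fun j : Fin n => ¬ ∃ i, i < t ∧ j.val + 1 = 2 ^ i),
            (j.val + 1) * (C' j).val := by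
        apply Finset.sum_congr rfl
        intro j hj
        rw [Finset.mem_filter] at hj
        simp only [hC_def, dif_neg hj.2]
      have hC'zero : ∑ j ∈ Finset.univ.filter
            (fun j : Fin n => ∃ i, i < t ∧ j.val + 1 = 2 ^ i),
            (j.val + 1) * (C' j).val = 0 := by
        apply Finset.sum_eq_zero
        intro j hj
        rw [Finset.mem_filter] at hj
        obtain ⟨i, hi, hji⟩ := hj.2
        have hjval : j = ⟨2 ^ i - 1, by omega⟩ := by
          apply Fin.ext; simp; omega
        rw [hjval, hC' i hi]
        simp
      have hdyadic : ∑ j ∈ Finset.univ.filter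
            (fun j : Fin n => ∃ i, i < t ∧ j.val + 1 = 2 ^ i),
            (j.val + 1) * (C j).val = d := by
        rw [Finset.sum_bij (i := fun (j : Fin n) (hj : j ∈ Finset.univ.filter
            (fun j : Fin n => ∃ i, i < t ∧ j.val + 1 = 2 ^ i)) => Nat.log 2 (j.val + 1))
          (t := Finset.range t)
          (g := fun i => 2 ^ i * (if d.testBit i then 1 else 0))]
        · exact sum_testBit_eq t d (by omega)
        · intro j hj
          rw [Finset.mem_filter] at hj
          obtain ⟨i, hi, hji⟩ := hj.2
          rw [hji, Nat.log_pow one_lt_two]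
          exact Finset.mem_range.mpr hi
        · intro j₁ hj₁ j₂ hj₂ heq
          rw [Finset.mem_filter] at hj₁ hj₂
          obtain ⟨i₁, hi₁, hji₁⟩ := hj₁.2
          obtain ⟨i₂, hi₂, hji₂⟩ := hj₂.2
          rw [hji₁, hji₂, Nat.log_pow one_lt_two, Nat.log_pow one_lt_two] at heq
          subst heq
          apply Fin.ext
          omega
        · intro i hi
          rw [Finset.mem_range] at hi
          have hin : 2 ^ i - 1 < n := by have := hpow i hi; have := hone i; omega
          refine ⟨⟨2 ^ i - 1, hin⟩, ?_, ?_⟩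
          · rw [Finset.mem_filter]
            exact ⟨Finset.mem_univ _, ⟨i, hi, by simp; have := hone i; omega⟩⟩
          · have : (2 ^ i - 1) + 1 = 2 ^ i := by have := hone i; omega
            simp only [this]
            exact Nat.log_pow one_lt_two i
        · intro j hj
          rw [Finset.mem_filter] at hj
          obtain ⟨i, hi, hji⟩ := hj.2
          simp only [hC_def, dif_pos hj.2]
          rw [hji, Nat.log_pow one_lt_two]
          rcases Nat.testBit d i with _ | _ <;> simp [apply_ite (Fin.val)]
      omega
    have hsyn' : synBin C' < n + 1 := Nat.mod_lt _ (by omega)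
    show (∑ j : Fin n, (j.val + 1) * (C j).val) % (n + 1) = a
    rw [key]
    have : (∑ j : Fin n, (j.val + 1) * (C' j).val) % (n + 1) = synBin C' := rfl
    rw [hd_def, Nat.add_mod_mod, ← Nat.mod_add_mod, this]
    have heq : synBin C' + (a + (n + 1) - synBin C') = a + (n + 1) := by omega
    rw [heq, Nat.add_mod_right, Nat.mod_eq_of_lt (by omega)]
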